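/- Fix integers 1 ≤ d < n, a field k, m ∈ I_{d,n}, and distinct m-primary relations F_1,…,F_k, with associated polynomial ring R_{[k]} and homomorphism φ_{[k]}. Let i ∈ {1,…,k} and let {u,v} ≠ {u',v'} be two distinct pairs in Λ_{F_i}, and let f, g ∈ k[p_w : w ∈ I_{d,n}] be polynomials such that f·x_{(u,v)} − g·x_{(u',v')} ∈ ker φ_{[k]}. Then there exists h ∈ k[p_w : w ∈ I_{d,n}] with f = h·p_{u'}·p_{v'} and g = h·p_u·p_v; in particular f·x_{(u,v)} − g·x_{(u',v')} = h·(p_{u'}p_{v'}·x_{(u,v)} − p_u p_v·x_{(u',v')}). -/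

import Mathlib

namespace GrassmannianResolution

/-- `I_{d,n}`: the set of `d`-element subsets of `{1,…,n}` (as subsets of `Fin n`). -/
abbrev Idn (d n : ℕ) : Type := {s : Finset (Fin n) // s.card = d}

/-- The Plücker coordinate `p_{s₁ ⋯ s_{d-1} a}` of the list consisting of the elements of `s`
in increasing order followed by `a`, with the standard sign/zero conventions:
it is `0` if the entries are not pairwise distinct (or do not form a valid index),
and otherwise the sign of the sorting permutation times the corresponding variable. -/
noncomputable def pxa (d n : ℕ) (K : Type*) [CommRing K] (s : Finset (Fin n)) (a : Fin n) :
    MvPolynomial (Idn d n) K :=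
  if h : a ∉ s ∧ (insert a s).card = d then
    ((-1 : ℤ) ^ (s.filter fun x => a < x).card) • MvPolynomial.X ⟨insert a s, h.2⟩
  else 0

/-- The Plücker coordinate `p_{a s₁ ⋯ s_{d-1}}` (`a` prepended to the sorted list of `s`). -/
noncomputable def pax (d n : ℕ) (K : Type*) [CommRing K] (a : Fin n) (s : Finset (Fin n)) :
    MvPolynomial (Idn d n) K :=
  if h : a ∉ s ∧ (insert a s).card = d then
    ((-1 : ℤ) ^ (s.filter fun x => x < a).card) • MvPolynomial.X ⟨insert a s, h.2⟩
  else 0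

/-- `p_s` for an index set `s` (listed in increasing order). -/
noncomputable def pvar (d n : ℕ) (K : Type*) [CommRing K] (s : Finset (Fin n)) :
    MvPolynomial (Idn d n) K :=
  if h : s.card = d then MvPolynomial.X ⟨s, h⟩ else 0

/-- The Plücker relation `F_{h,K} = Σ_{λ} (−1)^{λ−1} p_{h K_λ} p_{K ∖ K_λ}`. -/
noncomputable def pluckerRel (d n : ℕ) (K : Type*) [CommRing K] (hh Kk : Finset (Fin n)) :
    MvPolynomial (Idn d n) K :=
  ∑ c ∈ Kk, ((-1 : ℤ) ^ ((Kk.filter fun x => x ≤ c).card + 1)) •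
    (pxa d n K hh c * pvar d n K (Kk.erase c))

/-- The `m`-primary Plücker relation
`F_{m,u} = p_m p_{u^r u₀} + Σ_{i=1}^d (−1)^i p_{u^r m_i} p_{u₀ (m ∖ m_i)}`,
where `u₀ = min (u ∖ m)` and `u^r = u ∖ {u₀}`. -/
noncomputable def primaryRel (d n : ℕ) (K : Type*) [CommRing K] (m u : Idn d n) :
    MvPolynomial (Idn d n) K :=
  if h : (u.1 \ m.1).Nonempty then
    MvPolynomial.X m * pxa d n K (u.1.erase ((u.1 \ m.1).min' h)) ((u.1 \ m.1).min' h)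
      + ∑ c ∈ m.1, ((-1 : ℤ) ^ (m.1.filter fun x => x ≤ c).card) •
          (pxa d n K (u.1.erase ((u.1 \ m.1).min' h)) c *
            pax d n K ((u.1 \ m.1).min' h) (m.1.erase c))
  else 0

/-- Dehomogenization at the chart `p_m = 1`: the `K`-algebra map sending `p_m ↦ 1` and
`p_u ↦ x_u` for `u ≠ m`. -/
noncomputable def dehom (d n : ℕ) (K : Type*) [CommRing K] (m : Idn d n) :
    MvPolynomial (Idn d n) K →ₐ[K] MvPolynomial {w : Idn d n // w ≠ m} K :=
  MvPolynomial.aeval fun w => if h : w = m then 1 else MvPolynomial.X ⟨w, h⟩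

/-- The set of (unordered) pairs `Λ_F` of a primary relation `F = F_{m,u}`, encoded as
two-element sets of index sets: the leading pair `{m, u}` together with the pairs
`{u^r ∪ {c}, {u₀} ∪ (m ∖ {c})}` for `c ∈ m ∖ u`. -/
def lamF {d n : ℕ} (m u : Idn d n) : Finset (Finset (Finset (Fin n))) :=
  if h : (u.1 \ m.1).Nonempty then
    insert {m.1, u.1}
      ((m.1 \ u.1).image fun c =>
        {insert c (u.1.erase ((u.1 \ m.1).min' h)),
          insert ((u.1 \ m.1).min' h) (m.1.erase c)})
  else ∅

/-- The union `Λ_{F_1} ∪ ⋯ ∪ Λ_{F_κ}` for a family of primary relations. -/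
abbrev lamU {d n κ : ℕ} (m : Idn d n) (us : Fin κ → Idn d n) :
    Finset (Finset (Finset (Fin n))) :=
  Finset.univ.biUnion fun i => lamF m (us i)

/-- The index type of the ρ-variables: pairs in `Λ_{F_1} ∪ ⋯ ∪ Λ_{F_κ}`. -/
abbrev RhoIx {d n κ : ℕ} (m : Idn d n) (us : Fin κ → Idn d n) : Type :=
  {P : Finset (Finset (Fin n)) // P ∈ lamU m us}

/-- `p_u · p_v` for an unordered pair `P = {u, v}`. -/
noncomputable def pprodP (d n : ℕ) (K : Type*) [CommRing K] (P : Finset (Finset (Fin n))) :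
    MvPolynomial (Idn d n) K :=
  ∏ s ∈ P, pvar d n K s

/-- The homomorphism `φ_{[κ]} : R_{[κ]} → k[p_u]`, `p_u ↦ p_u`, `x_{(u,v)} ↦ p_u p_v`. -/
noncomputable def phiR {d n κ : ℕ} (K : Type*) [CommRing K] (m : Idn d n)
    (us : Fin κ → Idn d n) :
    MvPolynomial (Idn d n ⊕ RhoIx m us) K →ₐ[K] MvPolynomial (Idn d n) K :=
  MvPolynomial.aeval (Sum.elim MvPolynomial.X fun P => pprodP d n K P.1)

/-- The inclusion `k[p_u] → R_{[κ]}`. -/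
noncomputable def iotaR {d n κ : ℕ} (K : Type*) [CommRing K] (m : Idn d n)
    (us : Fin κ → Idn d n) :
    MvPolynomial (Idn d n) K →ₐ[K] MvPolynomial (Idn d n ⊕ RhoIx m us) K :=
  MvPolynomial.rename Sum.inl

/-- Total degree of an exponent in the block of ρ-variables `{x_P : P ∈ Λ_{F_i}}`. -/
def blockDeg {d n κ : ℕ} (m : Idn d n) (us : Fin κ → Idn d n) (i : Fin κ)
    (e : (Idn d n ⊕ RhoIx m us) →₀ ℕ) : ℕ :=
  e.sum fun a c => Sum.elim (fun _ => 0) (fun P => if P.1 ∈ lamF m (us i) then c else 0) a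

/-- Total degree of an exponent in the ϖ-variables `{p_u}`. -/
def pDegE {d n κ : ℕ} (m : Idn d n) (us : Fin κ → Idn d n)
    (e : (Idn d n ⊕ RhoIx m us) →₀ ℕ) : ℕ :=
  e.sum fun a c => Sum.elim (fun _ => c) (fun _ => 0) a

/-- Total degree of an exponent in all ρ-variables. -/
def rhoDegE {d n κ : ℕ} (m : Idn d n) (us : Fin κ → Idn d n)
    (e : (Idn d n ⊕ RhoIx m us) →₀ ℕ) : ℕ :=
  e.sum fun a c => Sum.elim (fun _ => 0) (fun _ => c) a

/-- A polynomial of `R_{[κ]}` is multi-homogeneous if it is homogeneous in the ϖ-variables and,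
for each `i`, homogeneous in the block of ρ-variables `{x_P : P ∈ Λ_{F_i}}`. -/
def MultiHom {d n κ : ℕ} (K : Type*) [CommRing K] (m : Idn d n) (us : Fin κ → Idn d n)
    (f : MvPolynomial (Idn d n ⊕ RhoIx m us) K) : Prop :=
  ∀ e ∈ f.support, ∀ e' ∈ f.support,
    pDegE m us e = pDegE m us e' ∧ ∀ i, blockDeg m us i e = blockDeg m us i e'

/-- A polynomial of `R_{[κ]}` is ρ-linear if, for each `i`, its total degree in the block
`{x_P : P ∈ Λ_{F_i}}` is at most 1. -/
def RhoLinear {d n κ : ℕ} (K : Type*) [CommRing K] (m : Idn d n) (us : Fin κ → Idn d n)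
    (f : MvPolynomial (Idn d n ⊕ RhoIx m us) K) : Prop :=
  ∀ e ∈ f.support, ∀ i, blockDeg m us i e ≤ 1

/-- `deg_ρ`: the total degree of a polynomial of `R_{[κ]}` in all the ρ-variables. -/
def rhoDegP {d n κ : ℕ} (K : Type*) [CommRing K] (m : Idn d n) (us : Fin κ → Idn d n)
    (f : MvPolynomial (Idn d n ⊕ RhoIx m us) K) : ℕ :=
  f.support.sup (rhoDegE m us)

/-- The monic monomial of `R_{[κ]}` in the ρ-variables only with exponent `ε`. -/
noncomputable def rmon {d n κ : ℕ} (K : Type*) [CommRing K] (m : Idn d n)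
    (us : Fin κ → Idn d n) (ε : RhoIx m us →₀ ℕ) :
    MvPolynomial (Idn d n ⊕ RhoIx m us) K :=
  MvPolynomial.monomial (ε.mapDomain Sum.inr) 1


open MvPolynomial

private lemma primeX {σ : Type*} {K : Type*} [Field K] (i : σ) :
    Prime (X i : MvPolynomial σ K) := by
  classical
  let E : MvPolynomial σ K ≃ₐ[K] Polynomial (MvPolynomial {j : σ // j ≠ i} K) :=
    (renameEquiv K (Equiv.optionSubtypeNe i).symm).trans
      (optionEquivLeft K {j : σ // j ≠ i})
  have hE : E (X i) = Polynomial.X := by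
    simp [E, Equiv.optionSubtypeNe_symm_self, optionEquivLeft_X_none]
  exact (MulEquiv.prime_iff E.toRingEquiv.toMulEquiv).mp (hE ▸ Polynomial.prime_X)

private lemma key {σ : Type*} {K : Type*} [Field K] {a b a' b' : σ}
    (h1 : a' ≠ a) (h2 : a' ≠ b) (h3 : b' ≠ a) (h4 : b' ≠ b)
    (f g : MvPolynomial σ K)
    (heq : f * (X a * X b) = g * (X a' * X b')) :
    ∃ h : MvPolynomial σ K, f = h * (X a' * X b') ∧ g = h * (X a * X b) := by
  classical
  have hXne : ∀ c : σ, (X c : MvPolynomial σ K) ≠ 0 := fun c => X_ne_zero c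
  have hda' : (X a' : MvPolynomial σ K) ∣ f := by
    have hdvd : (X a' : MvPolynomial σ K) ∣ f * (X a * X b) :=
      ⟨g * X b', by rw [heq]; ring⟩
    rcases (primeX a').dvd_mul.mp hdvd with h | h
    · exact h
    rcases (primeX a').dvd_mul.mp h with h | h
    · exact absurd (X_dvd_X.mp h) h1
    · exact absurd (X_dvd_X.mp h) h2
  obtain ⟨f₁, rfl⟩ := hda'
  have heq1 : f₁ * (X a * X b) = g * X b' := by
    have : X a' * (f₁ * (X a * X b)) = X a' * (g * X b') := by
      linear_combination heq
    exact mul_left_cancel₀ (hXne a') this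
  have hdb' : (X b' : MvPolynomial σ K) ∣ f₁ := by
    have hdvd : (X b' : MvPolynomial σ K) ∣ f₁ * (X a * X b) := ⟨g, by rw [heq1]; ring⟩
    rcases (primeX b').dvd_mul.mp hdvd with h | h
    · exact h
    rcases (primeX b').dvd_mul.mp h with h | h
    · exact absurd (X_dvd_X.mp h) h3
    · exact absurd (X_dvd_X.mp h) h4
  obtain ⟨h, rfl⟩ := hdb'
  refine ⟨h, by ring, ?_⟩
  have : X b' * (h * (X a * X b)) = X b' * g := by linear_combination heq1
  exact (mul_left_cancel₀ (hXne b') this).symm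


private lemma phi_iota {d n κ : ℕ} (K : Type*) [CommRing K] (m : Idn d n)
    (us : Fin κ → Idn d n) (f : MvPolynomial (Idn d n) K) :
    phiR K m us (iotaR K m us f) = f := by
  unfold phiR iotaR
  rw [aeval_rename]
  have h : (Sum.elim (X : Idn d n → MvPolynomial (Idn d n) K)
      (fun P : RhoIx m us => pprodP d n K P.1)) ∘ Sum.inl = X := rfl
  rw [h, aeval_X_left_apply]

private lemma lamF_pairs {d n : ℕ} (hd : 1 ≤ d) (m u : Idn d n)
    (h2 : 2 ≤ (u.1 \ m.1).card)
    {P P' : Finset (Finset (Fin n))} (hP : P ∈ lamF m u) (hP' : P' ∈ lamF m u)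
    (hPP' : P ≠ P') :
    ∃ a b a' b' : Finset (Fin n), P = {a, b} ∧ P' = {a', b'} ∧
      a.card = d ∧ b.card = d ∧ a'.card = d ∧ b'.card = d ∧
      a ≠ b ∧ a' ≠ b' ∧ a' ≠ a ∧ a' ≠ b ∧ b' ≠ a ∧ b' ≠ b := by
  classical
  have hu : (u.1 \ m.1).Nonempty := Finset.card_pos.mp (by omega)
  set u₀ := (u.1 \ m.1).min' hu with hu₀def
  have hu₀ : u₀ ∈ u.1 \ m.1 := Finset.min'_mem _ _
  have hu₀u : u₀ ∈ u.1 := (Finset.mem_sdiff.mp hu₀).1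
  have hu₀m : u₀ ∉ m.1 := (Finset.mem_sdiff.mp hu₀).2
  obtain ⟨w, hwmem, hwne⟩ := Finset.exists_mem_ne (by omega :
    1 < (u.1 \ m.1).card) u₀
  have hwu : w ∈ u.1 := (Finset.mem_sdiff.mp hwmem).1
  have hwm : w ∉ m.1 := (Finset.mem_sdiff.mp hwmem).2
  -- notation for the two sets of a non-leading pair
  set A : Fin n → Finset (Fin n) := fun c => insert c (u.1.erase u₀) with hAdef
  set B : Fin n → Finset (Fin n) := fun c => insert u₀ (m.1.erase c) with hBdef
  -- structure of membership in lamF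
  have struct : ∀ Q ∈ lamF m u, Q = {m.1, u.1} ∨
      ∃ c, c ∈ m.1 ∧ c ∉ u.1 ∧ Q = {A c, B c} := by
    intro Q hQ
    unfold lamF at hQ
    rw [dif_pos hu] at hQ
    rcases Finset.mem_insert.mp hQ with h1 | h1
    · exact Or.inl h1
    · obtain ⟨c, hc, rfl⟩ := Finset.mem_image.mp h1
      rw [Finset.mem_sdiff] at hc
      exact Or.inr ⟨c, hc.1, hc.2, rfl⟩
  -- basic facts about A c and B c
  have hAcard : ∀ c, c ∉ u.1 → (A c).card = d := by
    intro c hc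
    rw [hAdef]
    rw [Finset.card_insert_of_notMem (fun hx => hc (Finset.mem_of_mem_erase hx)),
      Finset.card_erase_of_mem hu₀u, u.2]
    omega
  have hBcard : ∀ c, c ∈ m.1 → (B c).card = d := by
    intro c hc
    rw [hBdef]
    rw [Finset.card_insert_of_notMem (fun hx => hu₀m (Finset.mem_of_mem_erase hx)),
      Finset.card_erase_of_mem hc, m.2]
    omega
  have hwA : ∀ c, w ∈ A c := fun c =>
    Finset.mem_insert_of_mem (Finset.mem_erase.mpr ⟨hwne, hwu⟩)
  have hwB : ∀ c, w ∉ B c := by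
    intro c hx
    rcases Finset.mem_insert.mp hx with h | h
    · exact hwne h
    · exact hwm (Finset.mem_of_mem_erase h)
  have hcA : ∀ c, c ∈ A c := fun c => Finset.mem_insert_self _ _
  have hcB : ∀ c, c ∈ m.1 → c ∉ B c := by
    intro c hcm hx
    rcases Finset.mem_insert.mp hx with h | h
    · exact hu₀m (h ▸ hcm)
    · exact (Finset.notMem_erase c m.1) h
  have hcA' : ∀ c c', c ≠ c' → c ∉ u.1 → c ∉ A c' := by
    intro c c' hne hcu hx
    rcases Finset.mem_insert.mp hx with h | h
    · exact hne h
    · exact hcu (Finset.mem_of_mem_erase h)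
  have hc'B : ∀ c c', c' ∈ m.1 → c' ≠ c → c' ∈ B c := by
    intro c c' hc'm hne
    exact Finset.mem_insert_of_mem (Finset.mem_erase.mpr ⟨hne, hc'm⟩)
  have hmu : m.1 ≠ u.1 := (ne_of_mem_of_not_mem' hu₀u hu₀m).symm
  have hmA : ∀ c, m.1 ≠ A c := fun c => (ne_of_mem_of_not_mem' (hwA c) hwm).symm
  have hmB : ∀ c, m.1 ≠ B c :=
    fun c => (ne_of_mem_of_not_mem' (Finset.mem_insert_self _ _) hu₀m).symm
  have huA : ∀ c, c ∉ u.1 → u.1 ≠ A c :=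
    fun c hc => (ne_of_mem_of_not_mem' (hcA c) hc).symm
  have huB : ∀ c, u.1 ≠ B c := fun c => ne_of_mem_of_not_mem' hwu (hwB c)
  have hAB : ∀ c, c ∈ m.1 → A c ≠ B c := fun c hc =>
    ne_of_mem_of_not_mem' (hcA c) (hcB c hc)
  rcases struct P hP with rfl | ⟨c, hcm, hcu, rfl⟩ <;>
    rcases struct P' hP' with h' | ⟨c', hc'm, hc'u, h'⟩
  · exact absurd h' hPP'.symm
  · subst h'
    exact ⟨m.1, u.1, A c', B c', rfl, rfl, m.2, u.2, hAcard c' hc'u, hBcard c' hc'm,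
      hmu, hAB c' hc'm, (hmA c').symm, (huA c' hc'u).symm, (hmB c').symm, (huB c').symm⟩
  · subst h'
    exact ⟨A c, B c, m.1, u.1, rfl, rfl, hAcard c hcu, hBcard c hcm, m.2, u.2,
      hAB c hcm, hmu, hmA c, hmB c, huA c hcu, huB c⟩
  · subst h'
    have hcc' : c ≠ c' := by
      rintro rfl; exact hPP' rfl
    refine ⟨A c, B c, A c', B c', rfl, rfl, hAcard c hcu, hBcard c hcm,
      hAcard c' hc'u, hBcard c' hc'm, hAB c hcm, hAB c' hc'm, ?_, ?_, ?_, ?_⟩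
    · exact (ne_of_mem_of_not_mem' (hcA c) (hcA' c c' hcc' hcu)).symm
    · exact ne_of_mem_of_not_mem' (hwA c') (hwB c)
    · exact (ne_of_mem_of_not_mem' (hwA c) (hwB c')).symm
    · exact ne_of_mem_of_not_mem' (hc'B c' c hcm hcc') (hcB c hcm)


/-- If `{u,v} ≠ {u',v'}` are distinct pairs of `Λ_{F_i}` and
`f·x_{(u,v)} − g·x_{(u',v')} ∈ ker φ_{[κ]}`, then `f = h·p_{u'}p_{v'}` and `g = h·p_u p_v`
for some polynomial `h` in the ϖ-variables. -/
theorem kernel_binomial_degRho_one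
    (d n : ℕ) (hd : 1 ≤ d) (hdn : d < n) (K : Type*) [Field K]
    (m : Idn d n) (κ : ℕ) (us : Fin κ → Idn d n)
    (hprim : ∀ i, 2 ≤ ((us i).1 \ m.1).card) (hdist : Function.Injective us)
    (i : Fin κ) (P P' : Finset (Finset (Fin n)))
    (hP : P ∈ lamF m (us i)) (hP' : P' ∈ lamF m (us i)) (hPP' : P ≠ P')
    (f g : MvPolynomial (Idn d n) K)
    (hker : phiR K m us
        (iotaR K m us f *
            MvPolynomial.X (Sum.inr ⟨P, Finset.mem_biUnion.mpr ⟨i, Finset.mem_univ i, hP⟩⟩) -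
          iotaR K m us g *
            MvPolynomial.X (Sum.inr ⟨P', Finset.mem_biUnion.mpr ⟨i, Finset.mem_univ i, hP'⟩⟩))
      = 0) :
    ∃ h : MvPolynomial (Idn d n) K, f = h * pprodP d n K P' ∧ g = h * pprodP d n K P := by
  classical
  obtain ⟨a, b, a', b', hPab, hP'ab, ha, hb, ha', hb', hab, ha'b', h1, h2, h3, h4⟩ :=
    lamF_pairs hd m (us i) (hprim i) hP hP' hPP'
  have pp : pprodP d n K P = X (⟨a, ha⟩ : Idn d n) * X (⟨b, hb⟩ : Idn d n) := by
    rw [hPab]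
    unfold pprodP
    rw [Finset.prod_pair hab]
    simp [pvar, ha, hb]
  have pp' : pprodP d n K P' = X (⟨a', ha'⟩ : Idn d n) * X (⟨b', hb'⟩ : Idn d n) := by
    rw [hP'ab]
    unfold pprodP
    rw [Finset.prod_pair ha'b']
    simp [pvar, ha', hb']
  have heq : f * pprodP d n K P = g * pprodP d n K P' := by
    rw [map_sub, map_mul, map_mul, phi_iota, phi_iota] at hker
    have hX1 : phiR K m us
        (X (Sum.inr ⟨P, Finset.mem_biUnion.mpr ⟨i, Finset.mem_univ i, hP⟩⟩)) =
        pprodP d n K P := by simp [phiR]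
    have hX2 : phiR K m us
        (X (Sum.inr ⟨P', Finset.mem_biUnion.mpr ⟨i, Finset.mem_univ i, hP'⟩⟩)) =
        pprodP d n K P' := by simp [phiR]
    rw [hX1, hX2] at hker
    exact sub_eq_zero.mp hker
  have hne1 : (⟨a', ha'⟩ : Idn d n) ≠ ⟨a, ha⟩ := fun hE => h1 (congrArg Subtype.val hE)
  have hne2 : (⟨a', ha'⟩ : Idn d n) ≠ ⟨b, hb⟩ := fun hE => h2 (congrArg Subtype.val hE)
  have hne3 : (⟨b', hb'⟩ : Idn d n) ≠ ⟨a, ha⟩ := fun hE => h3 (congrArg Subtype.val hE)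
  have hne4 : (⟨b', hb'⟩ : Idn d n) ≠ ⟨b, hb⟩ := fun hE => h4 (congrArg Subtype.val hE)
  obtain ⟨h, hf, hg⟩ := key hne1 hne2 hne3 hne4 f g (by rw [← pp, ← pp']; exact heq)
  exact ⟨h, by rw [hf, pp'], by rw [hg, pp]⟩

end GrassmannianResolution
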